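/- Let T be a contraction on a Hilbert space H. The Schäffer operator U_T on ℓ²_ℤ(H) defined block-wise by U_T(0,0) = T, U_T(-1,0) = D_T, U_T(-1,1) = -T*, U_T(0,1) = D_{T*}, U_T(j, j+1) = I for j ≠ 0, -1, and 0 elsewhere, is a unitary operator, and P_H U_T^n|_H = T^n for all n ≥ 0. -/

import Mathlib

set_option synthInstance.maxHeartbeats 1000000
set_option maxHeartbeats 1000000

open scoped InnerProductSpace

section Aux

variable {H : Type*} [NormedAddCommGroup H] [InnerProductSpace ℂ H] [CompleteSpace H]

lemma schaeffer_aux_intertwine [Nontrivial H] (t a b : H →L[ℂ] H)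
    (ha : IsSelfAdjoint a) (hb : IsSelfAdjoint b) (hab : t * a = b * t)
    (f : ℝ → ℝ) (hf : Continuous f) : t * cfc f a = cfc f b * t := by
  have hpow : ∀ n : ℕ, t * a ^ n = b ^ n * t := by
    intro n
    induction n with
    | zero => simp
    | succ n ih =>
      rw [pow_succ, ← mul_assoc, ih, mul_assoc, hab, ← mul_assoc, ← pow_succ]
  have hpoly : ∀ p : Polynomial ℝ, t * Polynomial.aeval a p = Polynomial.aeval b p * t := by
    intro p
    induction p using Polynomial.induction_on' with
    | add p q hp hq => rw [map_add, map_add, mul_add, add_mul, hp, hq]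
    | monomial n c =>
      simp only [Polynomial.aeval_monomial]
      calc t * (algebraMap ℝ _ c * a ^ n) = algebraMap ℝ _ c * (t * a ^ n) := by
            rw [← mul_assoc, ← Algebra.commutes, mul_assoc]
        _ = algebraMap ℝ _ c * (b ^ n * t) := by rw [hpow]
        _ = algebraMap ℝ _ c * b ^ n * t := by rw [mul_assoc]
  set M := max ‖a‖ ‖b‖ with hM
  have hM0 : 0 ≤ M := le_trans (norm_nonneg a) (le_max_left _ _)
  have hσa : spectrum ℝ a ⊆ Set.Icc (-M) M := by
    intro x hx
    have h1 : ‖x‖ ≤ ‖a‖ := spectrum.norm_le_norm_of_mem hx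
    rw [Real.norm_eq_abs] at h1
    exact Set.mem_Icc.mpr (abs_le.mp (h1.trans (le_max_left _ _)))
  have hσb : spectrum ℝ b ⊆ Set.Icc (-M) M := by
    intro x hx
    have h1 : ‖x‖ ≤ ‖b‖ := spectrum.norm_le_norm_of_mem hx
    rw [Real.norm_eq_abs] at h1
    exact Set.mem_Icc.mpr (abs_le.mp (h1.trans (le_max_right _ _)))
  have key : ∀ ε > (0:ℝ), ‖t * cfc f a - cfc f b * t‖ ≤ 2 * ‖t‖ * ε := by
    intro ε hε
    set f' : C(Set.Icc (-M) M, ℝ) := ContinuousMap.restrict (Set.Icc (-M) M) ⟨f, hf⟩ with hf'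
    have hmem : f' ∈ closure (polynomialFunctions (Set.Icc (-M) M) : Set C(Set.Icc (-M) M, ℝ)) := by
      rw [← Subalgebra.topologicalClosure_coe, polynomialFunctions_closure_eq_top]
      exact Algebra.mem_top
    obtain ⟨g, hgmem, hgdist⟩ := Metric.mem_closure_iff.mp hmem ε hε
    rw [polynomialFunctions_coe] at hgmem
    obtain ⟨p, rfl⟩ := hgmem
    have happrox : ∀ x : ℝ, x ∈ Set.Icc (-M) M → ‖f x - p.eval x‖ ≤ ε := by
      intro x hx
      have h2 := ContinuousMap.dist_apply_le_dist (f := f')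
        (g := Polynomial.toContinuousMapOnAlgHom (Set.Icc (-M) M) p) ⟨x, hx⟩
      rw [dist_eq_norm] at h2
      have h3 : f' ⟨x, hx⟩ = f x := rfl
      have h4 : (Polynomial.toContinuousMapOnAlgHom (Set.Icc (-M) M) p) ⟨x, hx⟩ = p.eval x := by
        simp [Polynomial.toContinuousMapOnAlgHom_apply, Polynomial.toContinuousMapOn_apply,
          Polynomial.toContinuousMap_apply]
      rw [h3, h4] at h2
      exact h2.trans (le_of_lt hgdist)
    have e1 : ‖cfc f a - cfc p.eval a‖ ≤ ε := by
      rw [← cfc_sub f p.eval a hf.continuousOn (Polynomial.continuous p).continuousOn]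
      exact norm_cfc_le hε.le (fun x hx => happrox x (hσa hx))
    have e2 : ‖cfc p.eval b - cfc f b‖ ≤ ε := by
      rw [← cfc_sub p.eval f b (Polynomial.continuous p).continuousOn hf.continuousOn]
      refine norm_cfc_le hε.le (fun x hx => ?_)
      rw [norm_sub_rev]
      exact happrox x (hσb hx)
    have e3 : t * cfc p.eval a = cfc p.eval b * t := by
      rw [cfc_polynomial p a ha, cfc_polynomial p b hb]
      exact hpoly p
    have e4 : t * cfc f a - cfc f b * t
        = t * (cfc f a - cfc p.eval a) + (cfc p.eval b - cfc f b) * t := by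
      rw [mul_sub, sub_mul, e3]
      abel
    calc ‖t * cfc f a - cfc f b * t‖
        ≤ ‖t * (cfc f a - cfc p.eval a)‖ + ‖(cfc p.eval b - cfc f b) * t‖ := by
          rw [e4]; exact norm_add_le _ _
      _ ≤ ‖t‖ * ε + ε * ‖t‖ := by
          refine add_le_add ((norm_mul_le _ _).trans ?_) ((norm_mul_le _ _).trans ?_)
          · exact mul_le_mul_of_nonneg_left e1 (norm_nonneg t)
          · exact mul_le_mul_of_nonneg_right e2 (norm_nonneg t)
      _ = 2 * ‖t‖ * ε := by ring
  have hzero : ‖t * cfc f a - cfc f b * t‖ ≤ 0 := by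
    refine le_of_forall_pos_le_add ?_
    intro ε hε
    have h2 := key (ε / (2 * ‖t‖ + 1)) (by positivity)
    have h3 : 2 * ‖t‖ * (ε / (2 * ‖t‖ + 1)) ≤ ε := by
      rw [mul_div_assoc']
      rw [div_le_iff₀ (by positivity)]
      nlinarith [norm_nonneg t, hε.le]
    linarith
  have h5 : t * cfc f a - cfc f b * t = 0 :=
    norm_le_zero_iff.mp hzero
  exact sub_eq_zero.mp h5
lemma schaeffer_aux_sqrt_eq (a : H →L[ℂ] H) (ha : 0 ≤ a) : CFC.sqrt a = cfc Real.sqrt a := by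
  rw [CFC.sqrt_eq_cfc, cfc_nnreal_eq_real _ _ ha]
  congr 1
  unfold Real.sqrt; rfl

end Aux

/-- Let `T` be a contraction on `H`.  Any bounded operator `U_T` on
`ℓ²_ℤ(H)` acting block-wise by `(U_T x)_{-1} = D_T x_0 - T^* x_1`,
`(U_T x)_0 = T x_0 + D_{T^*} x_1`, `(U_T x)_j = x_{j+1}` (`j ≠ 0, -1`) — the Schäffer
matrix — is unitary, and `P_H U_T^n |_H = T^n` for all `n ≥ 0`. -/
theorem schaeffer_dilation_unitary
    {H : Type*} [NormedAddCommGroup H] [InnerProductSpace ℂ H] [CompleteSpace H]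
    (T : H →L[ℂ] H) (hT : ‖T‖ ≤ 1)
    (U : lp (fun _ : ℤ => H) 2 →L[ℂ] lp (fun _ : ℤ => H) 2)
    (hU : ∀ (x : lp (fun _ : ℤ => H) 2) (j : ℤ),
      (U x) j =
        if j = -1 then
          CFC.sqrt (1 - ContinuousLinearMap.adjoint T * T) (x 0) -
            ContinuousLinearMap.adjoint T (x 1)
        else if j = 0 then
          T (x 0) + CFC.sqrt (1 - T * ContinuousLinearMap.adjoint T) (x 1)
        else x (j + 1)) :
    (ContinuousLinearMap.adjoint U * U = 1 ∧ U * ContinuousLinearMap.adjoint U = 1) ∧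
    ∀ (n : ℕ) (h : H), ((U ^ n) (lp.single 2 0 h)) 0 = (T ^ n) h := by
  rcases subsingleton_or_nontrivial H with hH | hH
  · have hsub : Subsingleton (lp (fun _ : ℤ => H) 2) :=
      ⟨fun a b => lp.ext (Subsingleton.elim _ _)⟩
    exact ⟨⟨Subsingleton.elim _ _, Subsingleton.elim _ _⟩,
      fun n h => Subsingleton.elim _ _⟩
  set Ts := ContinuousLinearMap.adjoint T with hTs
  set D := CFC.sqrt (1 - Ts * T) with hDdef
  set D' := CFC.sqrt (1 - T * Ts) with hD'def
  -- nonnegativity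
  have hA : (0 : H →L[ℂ] H) ≤ 1 - Ts * T := by
    rw [sub_nonneg, hTs, ← ContinuousLinearMap.star_eq_adjoint,
      ← CStarAlgebra.norm_le_one_iff_of_nonneg _ (star_mul_self_nonneg T),
      CStarRing.norm_star_mul_self]
    nlinarith [norm_nonneg T]
  have hB : (0 : H →L[ℂ] H) ≤ 1 - T * Ts := by
    have hT' : ‖Ts‖ ≤ 1 := by
      rw [hTs]; rw [show ‖ContinuousLinearMap.adjoint T‖ = ‖T‖ from LinearIsometryEquiv.norm_map ContinuousLinearMap.adjoint T]; exact hT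
    have := (by
      rw [sub_nonneg, ← ContinuousLinearMap.star_eq_adjoint,
        ← CStarAlgebra.norm_le_one_iff_of_nonneg _ (star_mul_self_nonneg Ts),
        CStarRing.norm_star_mul_self]
      nlinarith [norm_nonneg Ts] : (0 : H →L[ℂ] H) ≤ 1 - ContinuousLinearMap.adjoint Ts * Ts)
    rwa [hTs, ContinuousLinearMap.adjoint_adjoint] at this
  have hAsa : IsSelfAdjoint (1 - Ts * T) := .of_nonneg hA
  have hBsa : IsSelfAdjoint (1 - T * Ts) := .of_nonneg hB
  have hDD : D * D = 1 - Ts * T := CFC.sqrt_mul_sqrt_self _ hA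
  have hD'D' : D' * D' = 1 - T * Ts := CFC.sqrt_mul_sqrt_self _ hB
  have hDsa : ContinuousLinearMap.adjoint D = D := by
    rw [← ContinuousLinearMap.star_eq_adjoint]
    exact IsSelfAdjoint.of_nonneg (CFC.sqrt_nonneg _)
  have hD'sa : ContinuousLinearMap.adjoint D' = D' := by
    rw [← ContinuousLinearMap.star_eq_adjoint]
    exact IsSelfAdjoint.of_nonneg (CFC.sqrt_nonneg _)
  -- intertwining relations
  have hTD : T * D = D' * T := by
    rw [hDdef, hD'def, schaeffer_aux_sqrt_eq _ hA, schaeffer_aux_sqrt_eq _ hB]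
    refine schaeffer_aux_intertwine T _ _ hAsa hBsa ?_ Real.sqrt Real.continuous_sqrt
    noncomm_ring
  have hDT : D * Ts = Ts * D' := by
    rw [hDdef, hD'def, schaeffer_aux_sqrt_eq _ hA, schaeffer_aux_sqrt_eq _ hB]
    have := schaeffer_aux_intertwine Ts _ _ hBsa hAsa (by noncomm_ring)
      Real.sqrt Real.continuous_sqrt
    exact this.symm
  -- inner-product identities
  have hinL : ∀ (P : H →L[ℂ] H) (u w : H), ⟪P u, w⟫_ℂ = ⟪u, ContinuousLinearMap.adjoint P w⟫_ℂ :=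
    fun P u w => (ContinuousLinearMap.adjoint_inner_right P u w).symm
  have h1 : ∀ u v : H, ⟪D u, D v⟫_ℂ = ⟪u, v⟫_ℂ - ⟪T u, T v⟫_ℂ := by
    intro u v
    rw [hinL D u (D v), hDsa, ← ContinuousLinearMap.mul_apply, hDD,
      ContinuousLinearMap.sub_apply, ContinuousLinearMap.one_apply,
      ContinuousLinearMap.mul_apply, inner_sub_right, hinL T u (T v), hTs]
  have h2 : ∀ u v : H, ⟪D' u, D' v⟫_ℂ = ⟪u, v⟫_ℂ - ⟪Ts u, Ts v⟫_ℂ := by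
    intro u v
    rw [hinL D' u (D' v), hD'sa, ← ContinuousLinearMap.mul_apply, hD'D',
      ContinuousLinearMap.sub_apply, ContinuousLinearMap.one_apply,
      ContinuousLinearMap.mul_apply, inner_sub_right, hinL Ts u (Ts v), hTs,
      ContinuousLinearMap.adjoint_adjoint]
  have h3 : ∀ u v : H, ⟪T u, D' v⟫_ℂ = ⟪D u, Ts v⟫_ℂ := by
    intro u v
    rw [hinL T u (D' v), hinL D u (Ts v), hDsa, ← hTs, ← ContinuousLinearMap.mul_apply,
      ← ContinuousLinearMap.mul_apply, hDT]
  have h4 : ∀ u v : H, ⟪D' u, T v⟫_ℂ = ⟪Ts u, D v⟫_ℂ := by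
    intro u v
    calc ⟪D' u, T v⟫_ℂ = starRingEnd ℂ ⟪T v, D' u⟫_ℂ := (inner_conj_symm _ _).symm
      _ = starRingEnd ℂ ⟪D v, Ts u⟫_ℂ := by rw [h3]
      _ = ⟪Ts u, D v⟫_ℂ := inner_conj_symm _ _
  have key2 : ∀ x0 x1 y0 y1 : H,
      ⟪D x0 - Ts x1, D y0 - Ts y1⟫_ℂ + ⟪T x0 + D' x1, T y0 + D' y1⟫_ℂ
        = ⟪x0, y0⟫_ℂ + ⟪x1, y1⟫_ℂ := by
    intro x0 x1 y0 y1
    simp only [inner_sub_left, inner_sub_right, inner_add_left, inner_add_right]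
    rw [h1, h2, h3, h4]
    ring
  -- U preserves inner products
  have hinner : ∀ x y : lp (fun _ : ℤ => H) 2, ⟪U x, U y⟫_ℂ = ⟪x, y⟫_ℂ := by
    intro x y
    set F : ℤ → ℂ := fun j => ⟪(U x) j, (U y) j⟫_ℂ with hF_def
    set G : ℤ → ℂ := fun j => ⟪x j, y j⟫_ℂ with hG_def
    have hF : Summable F := lp.summable_inner (U x) (U y)
    have hG : Summable G := lp.summable_inner x y
    have hF' : Summable (fun j : ℤ => F (j - 1)) := by
      have := ((Equiv.subRight (1 : ℤ)).summable_iff (f := F)).mpr hF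
      exact this
    have h0 : ∑' j : ℤ, F (j - 1) = ∑' j, F j := by
      have := (Equiv.subRight (1 : ℤ)).tsum_eq F
      simpa using this
    have hsupp : ∀ j ∉ ({0, 1} : Finset ℤ), F (j - 1) - G j = 0 := by
      intro j hj
      simp only [Finset.mem_insert, Finset.mem_singleton, not_or] at hj
      have e1 : F (j - 1) = ⟪x (j - 1 + 1), y (j - 1 + 1)⟫_ℂ := by
        rw [hF_def]
        simp only
        rw [hU x, hU y, if_neg (by omega), if_neg (by omega),
          if_neg (by omega), if_neg (by omega)]
      rw [e1]
      have : j - 1 + 1 = j := by omega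
      rw [this, hG_def, sub_self]
    have hfin : ∑ j ∈ ({0, 1} : Finset ℤ), (F (j - 1) - G j) = 0 := by
      rw [Finset.sum_insert (by norm_num), Finset.sum_singleton]
      have eA : F (0 - 1) = ⟪D (x 0) - Ts (x 1), D (y 0) - Ts (y 1)⟫_ℂ := by
        rw [hF_def]
        simp only
        rw [hU x, hU y, if_pos (by norm_num), if_pos (by norm_num)]
      have eB : F (1 - 1) = ⟪T (x 0) + D' (x 1), T (y 0) + D' (y 1)⟫_ℂ := by
        rw [hF_def]
        simp only
        rw [hU x, hU y]
        norm_num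
      rw [eA, eB, hG_def]
      simp only
      have := key2 (x 0) (x 1) (y 0) (y 1)
      linear_combination this
    have hsub : ∑' j : ℤ, (F (j - 1) - G j) = (∑' j : ℤ, F (j - 1)) - ∑' j, G j :=
      Summable.tsum_sub hF' hG
    have hsum2 : ∑' j : ℤ, (F (j - 1) - G j) = 0 := by
      rw [tsum_eq_sum hsupp, hfin]
    have hmain : ∑' j, F j = ∑' j, G j := by
      have : (∑' j : ℤ, F (j - 1)) - ∑' j, G j = 0 := by rw [← hsub, hsum2]
      rw [h0] at this
      exact sub_eq_zero.mp this
    rw [lp.inner_eq_tsum, lp.inner_eq_tsum]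
    exact hmain
  -- left inverse
  have hL : ContinuousLinearMap.adjoint U * U = 1 := by
    refine ContinuousLinearMap.ext fun x => ?_
    refine ext_inner_right ℂ fun y => ?_
    rw [ContinuousLinearMap.mul_apply, ContinuousLinearMap.adjoint_inner_left,
      hinner, ContinuousLinearMap.one_apply]
  -- norm preservation and surjectivity
  have hnorm : ∀ x, ‖U x‖ = ‖x‖ := by
    intro x
    rw [norm_eq_sqrt_re_inner (𝕜 := ℂ), norm_eq_sqrt_re_inner (𝕜 := ℂ) x, hinner]
  have hiso : Isometry U := AddMonoidHomClass.isometry_of_norm U hnorm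
  have hMem : ∀ (j : ℤ) (h : H), lp.single 2 j h ∈ Set.range U := by
    intro j h
    by_cases hj1 : j = -1
    · subst hj1
      refine ⟨lp.single 2 0 (D h) - lp.single 2 1 (T h), ?_⟩
      apply lp.ext
      funext i
      have hx0 : (lp.single 2 0 (D h) - lp.single 2 1 (T h) : lp (fun _ : ℤ => H) 2) 0 = D h := by
        rw [lp.coeFn_sub, Pi.sub_apply, lp.single_apply_self,
          lp.single_apply_ne 2 1 _ (by norm_num), sub_zero]
      have hx1 : (lp.single 2 0 (D h) - lp.single 2 1 (T h) : lp (fun _ : ℤ => H) 2) 1 = -(T h) := by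
        rw [lp.coeFn_sub, Pi.sub_apply, lp.single_apply_self,
          lp.single_apply_ne 2 0 _ (by norm_num), zero_sub]
      rw [hU]
      by_cases hi1 : i = -1
      · subst hi1
        rw [if_pos rfl, hx0, hx1, lp.single_apply_self, map_neg, sub_neg_eq_add,
          ← ContinuousLinearMap.mul_apply, ← ContinuousLinearMap.mul_apply, hDD]
        simp [ContinuousLinearMap.sub_apply]
      · by_cases hi0 : i = 0
        · subst hi0
          rw [if_neg (by norm_num), if_pos rfl, hx0, hx1, map_neg,
            ← ContinuousLinearMap.mul_apply, lp.single_apply_ne 2 (-1) _ (by norm_num),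
            ← ContinuousLinearMap.mul_apply, hTD]
          simp
        · rw [if_neg hi1, if_neg hi0, lp.coeFn_sub, Pi.sub_apply,
            lp.single_apply_ne 2 0 _ (by omega), lp.single_apply_ne 2 1 _ (by omega),
            lp.single_apply_ne 2 (-1) _ (by omega), sub_zero]
    · by_cases hj0 : j = 0
      · subst hj0
        refine ⟨lp.single 2 0 (Ts h) + lp.single 2 1 (D' h), ?_⟩
        apply lp.ext
        funext i
        have hx0 : (lp.single 2 0 (Ts h) + lp.single 2 1 (D' h) : lp (fun _ : ℤ => H) 2) 0
            = Ts h := by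
          rw [lp.coeFn_add, Pi.add_apply, lp.single_apply_self,
            lp.single_apply_ne 2 1 _ (by norm_num), add_zero]
        have hx1 : (lp.single 2 0 (Ts h) + lp.single 2 1 (D' h) : lp (fun _ : ℤ => H) 2) 1
            = D' h := by
          rw [lp.coeFn_add, Pi.add_apply, lp.single_apply_self,
            lp.single_apply_ne 2 0 _ (by norm_num), zero_add]
        rw [hU]
        by_cases hi1 : i = -1
        · subst hi1
          rw [if_pos rfl, hx0, hx1, lp.single_apply_ne 2 0 _ (by norm_num),
            ← ContinuousLinearMap.mul_apply, ← ContinuousLinearMap.mul_apply, hDT]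
          simp
        · by_cases hi0 : i = 0
          · subst hi0
            rw [if_neg (by norm_num), if_pos rfl, hx0, hx1, lp.single_apply_self,
              ← ContinuousLinearMap.mul_apply, ← ContinuousLinearMap.mul_apply, hD'D']
            simp [ContinuousLinearMap.sub_apply]
          · rw [if_neg hi1, if_neg hi0, lp.coeFn_add, Pi.add_apply,
              lp.single_apply_ne 2 0 _ (by omega), lp.single_apply_ne 2 1 _ (by omega),
              lp.single_apply_ne 2 0 _ hi0, add_zero]
      · refine ⟨lp.single 2 (j + 1) h, ?_⟩
        apply lp.ext
        funext i
        rw [hU]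
        by_cases hi1 : i = -1
        · subst hi1
          rw [if_pos rfl, lp.single_apply_ne 2 (j+1) _ (by omega),
            lp.single_apply_ne 2 (j+1) _ (by omega), lp.single_apply_ne 2 j _ (by omega)]
          simp
        · by_cases hi0 : i = 0
          · subst hi0
            rw [if_neg (by norm_num), if_pos rfl, lp.single_apply_ne 2 (j+1) _ (by omega),
              lp.single_apply_ne 2 (j+1) _ (by omega), lp.single_apply_ne 2 j _ (by omega)]
            simp
          · rw [if_neg hi1, if_neg hi0]
            by_cases hij : i = j
            · subst hij
              rw [lp.single_apply_self, lp.single_apply_self]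
            · rw [lp.single_apply_ne 2 (j+1) _ (by omega), lp.single_apply_ne 2 j _ hij]
  have hsurj : Function.Surjective U := by
    intro y
    have hclosed : IsClosed (Set.range U) := hiso.isClosedEmbedding.isClosed_range
    have hsum := lp.hasSum_single (E := fun _ : ℤ => H) (p := 2) (by norm_num) y
    have hmemcl : y ∈ closure (Set.range U) := by
      refine mem_closure_of_tendsto hsum (Filter.Eventually.of_forall fun s => ?_)
      have : ∑ i ∈ s, lp.single 2 i (y i) ∈ LinearMap.range U.toLinearMap :=
        Submodule.sum_mem _ fun i _ => by
          obtain ⟨w, hw⟩ := hMem i (y i)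
          exact ⟨w, hw⟩
      obtain ⟨w, hw⟩ := this
      exact ⟨w, hw⟩
    rwa [hclosed.closure_eq] at hmemcl
  have hR : U * ContinuousLinearMap.adjoint U = 1 := by
    refine ContinuousLinearMap.ext fun y => ?_
    obtain ⟨x, rfl⟩ := hsurj y
    have h1 : ContinuousLinearMap.adjoint U (U x) = x := by
      have := ContinuousLinearMap.ext_iff.mp hL x
      simpa [ContinuousLinearMap.mul_apply] using this
    simp [ContinuousLinearMap.mul_apply, h1]
  refine ⟨⟨hL, hR⟩, ?_⟩
  intro n h
  have main : ∀ n : ℕ,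
      (∀ j : ℤ, 1 ≤ j → ((U ^ n) (lp.single 2 0 h)) j = 0)
        ∧ ((U ^ n) (lp.single 2 0 h)) 0 = (T ^ n) h := by
    intro n
    induction n with
    | zero =>
      simp only [pow_zero, ContinuousLinearMap.one_apply]
      refine ⟨fun j hj => ?_, ?_⟩
      · exact lp.single_apply_ne 2 (0:ℤ) _ (by omega)
      · exact lp.single_apply_self (E := fun _ : ℤ => H) 2 (0:ℤ) h
    | succ n ih =>
      have hstep : (U ^ (n + 1)) (lp.single 2 0 h) = U ((U ^ n) (lp.single 2 0 h)) := by
        rw [pow_succ', ContinuousLinearMap.mul_apply]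
      constructor
      · intro j hj
        rw [hstep, hU, if_neg (by omega), if_neg (by omega)]
        exact ih.1 (j + 1) (by omega)
      · rw [hstep, hU, if_neg (by norm_num), if_pos rfl, ih.2, ih.1 1 le_rfl, map_zero,
          add_zero, ← ContinuousLinearMap.mul_apply, ← pow_succ']
  exact (main n).2
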